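/- For every ℓ ≥ 1, the maximum number of vertices of a 3-vertex-critical (P_2 + ℓP_1)-free graph is 2ℓ + 1. -/

import Mathlib

open SimpleGraph

/-- `G` is `k`-vertex-critical: `χ(G) = k` and deleting any vertex decreases `χ`. -/
def IsKVertexCritical {V : Type*} (G : SimpleGraph V) (k : ℕ) : Prop :=
  G.chromaticNumber = k ∧ ∀ v : V, (G.induce ({v}ᶜ : Set V)).chromaticNumber < k

/-- `G` has no induced subgraph isomorphic to `H`. -/
def InducedFree {V W : Type*} (G : SimpleGraph V) (H : SimpleGraph W) : Prop :=
  ∀ s : Set V, IsEmpty (G.induce s ≃g H)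

/-- `s` is an independent set of `G`. -/
def IsIndepSet {V : Type*} (G : SimpleGraph V) (s : Set V) : Prop :=
  s.Pairwise fun a b => ¬ G.Adj a b

/-- The graph `P_2 + ℓ P_1`: an edge together with `ℓ` isolated vertices. -/
def P2lP1 (ℓ : ℕ) : SimpleGraph (Fin (ℓ + 2)) := fromEdgeSet {s(0, 1)}

/-- The graph `P_3 + P_1`: a path on three vertices plus an isolated vertex. -/
def P3P1 : SimpleGraph (Fin 4) := fromEdgeSet {s(0, 1), s(1, 2)}

/-- The paw: a triangle with a pendant vertex. -/
def paw : SimpleGraph (Fin 4) := fromEdgeSet {s(0, 1), s(0, 2), s(1, 2), s(2, 3)}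

/-- The join of two graphs: all edges between the two sides are added. -/
def joinG {α β : Type*} (G : SimpleGraph α) (H : SimpleGraph β) : SimpleGraph (α ⊕ β) where
  Adj x y :=
    match x, y with
    | Sum.inl a, Sum.inl b => G.Adj a b
    | Sum.inr a, Sum.inr b => H.Adj a b
    | Sum.inl _, Sum.inr _ => True
    | Sum.inr _, Sum.inl _ => True
  symm := by
    constructor
    rintro (a | a) (b | b) h
    · exact G.adj_symm h
    · trivial
    · trivial
    · exact H.adj_symm h
  loopless := by
    constructor
    rintro (a | a) h
    · exact G.loopless.irrefl a h
    · exact H.loopless.irrefl a h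





private lemma colorable_two_of_no_odd_loop {V : Type} (G : SimpleGraph V)
    (h : ∀ (u : V) (w : G.Walk u u), ¬ Odd w.length) : G.Colorable 2 := by
  classical
  have hrep : ∀ v : V, G.Reachable v (G.connectedComponentMk v).out := by
    intro v
    exact (ConnectedComponent.exact ((G.connectedComponentMk v).out_eq)).symm
  refine ⟨G.recolorOfEquiv finTwoEquiv.symm (Coloring.mk
    (fun v => decide (G.dist v (G.connectedComponentMk v).out % 2 = 0)) ?_)⟩
  intro a b hadj hfab
  have hcomp : (G.connectedComponentMk a) = (G.connectedComponentMk b) :=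
    ConnectedComponent.sound hadj.reachable
  have hout : (G.connectedComponentMk b).out = (G.connectedComponentMk a).out := by rw [hcomp]
  obtain ⟨p, hp⟩ := (hrep a).exists_walk_length_eq_dist
  obtain ⟨q, hq⟩ := (hrep b).exists_walk_length_eq_dist
  have hloop := h a (Walk.cons hadj ((q.copy rfl hout).append p.reverse))
  rw [Nat.not_odd_iff_even, Nat.even_iff] at hloop
  simp only [Walk.length_cons, Walk.length_append, Walk.length_reverse, Walk.length_copy,
    hq, hp] at hloop
  simp only [decide_eq_decide] at hfab
  omega

private lemma walk_split {V : Type} {G : SimpleGraph V} :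
    ∀ {a b : V} (w : G.Walk a b) (i : ℕ), i ≤ w.length →
      ∃ (w1 : G.Walk a (w.getVert i)) (w2 : G.Walk (w.getVert i) b),
        w1.length = i ∧ w2.length = w.length - i ∧ ∀ k, w2.getVert k = w.getVert (i + k) := by
  intro a b w
  induction w with
  | nil =>
    intro i hi
    have : i = 0 := by simpa using hi
    subst this
    exact ⟨Walk.nil, Walk.nil, rfl, rfl, fun k => rfl⟩
  | @cons u x v h p ih =>
    intro i hi
    match i with
    | 0 =>
      refine ⟨Walk.nil.copy rfl (Walk.getVert_zero _).symm,
        (Walk.cons h p).copy (Walk.getVert_zero _).symm rfl, by simp, by simp, ?_⟩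
      intro k; simp [Walk.getVert_copy]
    | (j+1) =>
      obtain ⟨w1, w2, h1, h2, h3⟩ := ih j (by simpa [Walk.length_cons, Nat.succ_le_succ_iff] using hi)
      refine ⟨Walk.cons h w1, w2, by simp [h1], by simpa using h2, ?_⟩
      intro k
      rw [show j + 1 + k = (j + k) + 1 from by omega]
      exact h3 k

private lemma walk_split3 {V : Type} {G : SimpleGraph V} {u : V} (c : G.Walk u u) {i j : ℕ}
    (hij : i ≤ j) (hj : j ≤ c.length) :
    ∃ (w1 : G.Walk u (c.getVert i)) (m : G.Walk (c.getVert i) (c.getVert j))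
      (t : G.Walk (c.getVert j) u),
      w1.length = i ∧ m.length = j - i ∧ t.length = c.length - j := by
  obtain ⟨w1, w2, h1, h2, h3⟩ := walk_split c i (hij.trans hj)
  obtain ⟨m', t', hm, ht, _⟩ := walk_split w2 (j - i) (by omega)
  have hgv : w2.getVert (j - i) = c.getVert j := by
    rw [h3 (j - i)]; congr 1; omega
  exact ⟨w1, m'.copy rfl hgv, (t'.copy hgv rfl), h1, by simp [hm], by simp [ht]; omega⟩

private lemma walk_induce {V : Type} {G : SimpleGraph V} {S : Set V} :
    ∀ {a b : V} (w : G.Walk a b) (_ : ∀ x ∈ w.support, x ∈ S) (ha : a ∈ S) (hb : b ∈ S),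
      ∃ w' : (G.induce S).Walk ⟨a, ha⟩ ⟨b, hb⟩, w'.length = w.length := by
  intro a b w
  induction w with
  | nil =>
    intro _ ha hb
    exact ⟨Walk.nil.copy rfl rfl, rfl⟩
  | @cons u x v h p ih =>
    intro hS ha hb
    have hx : x ∈ S := hS x (by simp)
    obtain ⟨w', hw'⟩ := ih (fun y hy => hS y (by simp [hy])) hx hb
    exact ⟨Walk.cons (by simpa using h : (G.induce S).Adj ⟨u, ha⟩ ⟨x, hx⟩) w', by simp [hw']⟩

private lemma card_le_length {V : Type} [Fintype V] {G : SimpleGraph V} {u : V}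
    (c : G.Walk u u) (hc : 0 < c.length) (h : ∀ v : V, v ∈ c.support) :
    Fintype.card V ≤ c.length := by
  classical
  cases c with
  | nil => simp at hc
  | @cons _ x _ hadj p =>
    have hall : ∀ v : V, v ∈ p.support := by
      intro v
      have := h v
      rw [Walk.support_cons] at this
      rcases List.mem_cons.mp this with h' | h'
      · subst h'; exact p.end_mem_support
      · exact h'
    calc Fintype.card V = Finset.univ.card := rfl
      _ ≤ p.support.toFinset.card :=
        Finset.card_le_card (fun x _ => List.mem_toFinset.mpr (hall x))
      _ ≤ p.support.length := List.toFinset_card_le _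
      _ = p.length + 1 := Walk.length_support p
      _ = (Walk.cons hadj p).length := (Walk.length_cons _ _).symm

private lemma P2l_adj {ℓ : ℕ} {a b : Fin (ℓ + 2)} :
    (P2lP1 ℓ).Adj a b ↔ (a = 0 ∧ b = 1) ∨ (a = 1 ∧ b = 0) := by
  rw [P2lP1, fromEdgeSet_adj]
  constructor
  · rintro ⟨h, hne⟩
    simp only [Set.mem_singleton_iff, Sym2.eq_iff] at h
    tauto
  · rintro (⟨rfl, rfl⟩ | ⟨rfl, rfl⟩) <;>
      simp [Sym2.eq_iff, Fin.ext_iff]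

private lemma main_upper {ℓ : ℕ} (hℓ : 1 ≤ ℓ) (V : Type) [Fintype V] (G : SimpleGraph V)
    (hcrit : IsKVertexCritical G 3) (hfree : InducedFree G (P2lP1 ℓ)) :
    Fintype.card V ≤ 2 * ℓ + 1 := by
  classical
  obtain ⟨hχ, hdel⟩ := hcrit
  have hnc2 : ¬ G.Colorable 2 := by
    intro h
    have h2 := h.chromaticNumber_le
    rw [hχ] at h2
    norm_num at h2
  have hex : ∃ m : ℕ, Odd m ∧ ∃ (u : V) (w : G.Walk u u), w.length = m := by
    by_contra hno
    push_neg at hno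
    refine hnc2 (colorable_two_of_no_odd_loop G fun u w hw => ?_)
    exact (hno w.length hw u w) rfl
  obtain ⟨⟨hodd', u, c, hlen⟩, hmin'⟩ :
      (Odd (Nat.find hex) ∧ ∃ (u : V) (w : G.Walk u u), w.length = Nat.find hex) ∧
        ∀ m < Nat.find hex, ¬(Odd m ∧ ∃ (u : V) (w : G.Walk u u), w.length = m) :=
    ⟨Nat.find_spec hex, fun m hm => Nat.find_min hex hm⟩
  have hodd : Odd c.length := hlen ▸ hodd'
  have hmin : ∀ m, m < c.length → ¬(Odd m ∧ ∃ (u : V) (w : G.Walk u u), w.length = m) := by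
    rw [hlen]; exact hmin'
  clear hmin' hodd' hlen hnc2 hχ
  have hodd2 : c.length % 2 = 1 := Nat.odd_iff.mp hodd
  -- L1 : injectivity
  have L1 : ∀ i j : ℕ, i < j → j ≤ c.length → ¬(i = 0 ∧ j = c.length) →
      c.getVert i ≠ c.getVert j := by
    intro i j hij hj hne heq
    obtain ⟨w1, m, t, h1, hm, ht⟩ := walk_split3 c hij.le hj
    rcases Nat.even_or_odd (j - i) with he | ho
    · rw [Nat.even_iff] at he
      refine hmin (i + (c.length - j)) (by omega) ⟨by rw [Nat.odd_iff]; omega, u,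
        w1.append (t.copy heq.symm rfl), ?_⟩
      simp [Walk.length_append, h1, ht]
    · refine hmin (j - i) (by omega) ⟨ho, c.getVert i, m.copy rfl heq.symm, ?_⟩
      simp [hm]
  -- L2 : no chords
  have L2 : ∀ i j : ℕ, i < j → j ≤ c.length - 1 → j - i ≠ 1 → j - i ≠ c.length - 1 →
      ¬ G.Adj (c.getVert i) (c.getVert j) := by
    intro i j hij hj h1ne hn1ne hadj
    have hlen3 : 3 ≤ c.length := by
      rcases Nat.lt_or_ge c.length 3 with h | h
      · interval_cases hcl : c.length
        · omega
        · -- length 1 : loop, impossible since G is simple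
          exact absurd (c.adj_getVert_succ (by omega : 0 < c.length)) (by
            have h0 : c.getVert 0 = u := c.getVert_zero
            have h1 : c.getVert 1 = u := by
              have := c.getVert_length; rwa [hcl] at this
            rw [h0, h1]; exact G.loopless.irrefl u)
        · omega
      · exact h
    obtain ⟨w1, m, t, h1, hm, ht⟩ := walk_split3 c hij.le (by omega)
    rcases Nat.even_or_odd (j - i) with he | ho
    · rw [Nat.even_iff] at he
      refine hmin ((j - i) + 1) (by omega) ⟨by rw [Nat.odd_iff]; omega, c.getVert i,
        m.concat hadj.symm, ?_⟩
      simp [Walk.length_concat, hm]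
    · rw [Nat.odd_iff] at ho
      refine hmin (i + (1 + (c.length - j))) (by omega) ⟨by rw [Nat.odd_iff]; omega, u,
        w1.append (Walk.cons hadj t), ?_⟩
      simp [Walk.length_append, Walk.length_cons, h1, ht]
      omega
  -- every vertex on the walk
  have hsup : ∀ v : V, v ∈ c.support := by
    intro v
    by_contra hv
    have hS : ∀ x ∈ c.support, x ∈ ({v}ᶜ : Set V) := by
      intro x hx
      simp only [Set.mem_compl_iff, Set.mem_singleton_iff]
      rintro rfl; exact hv hx
    obtain ⟨w', hw'⟩ := walk_induce c hS (hS u c.start_mem_support) (hS u c.start_mem_support)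
    have h3 := w'.three_le_chromaticNumber_of_odd_loop (by rwa [hw'])
    have h4 := hdel v
    have : ((3 : ℕ) : ℕ∞) = (3 : ℕ∞) := by norm_num
    rw [this] at h4
    exact absurd h4 (not_lt.mpr h3)
  have hcard : Fintype.card V ≤ c.length := card_le_length c (by omega) hsup
  -- suffices : c.length ≤ 2ℓ+1
  rcases Nat.lt_or_ge c.length (2 * ℓ + 2) with hsmall | hbig
  · omega
  have hn : 2 * ℓ + 3 ≤ c.length := by omega
  -- build induced P2 + ℓ P1
  set idx : Fin (ℓ + 2) → ℕ := fun a => if a.val = 0 then 0 else if a.val = 1 then 1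
    else 2 * a.val - 1 with hidx
  have hidxle : ∀ a : Fin (ℓ + 2), idx a ≤ 2 * ℓ + 1 := by
    intro a
    have := a.isLt
    simp only [hidx]
    split_ifs <;> omega
  have hidxinj : ∀ a b : Fin (ℓ + 2), idx a = idx b → a = b := by
    intro a b hab
    have ha := a.isLt
    have hb := b.isLt
    simp only [hidx] at hab
    apply Fin.ext
    split_ifs at hab <;> omega
  set f : Fin (ℓ + 2) → V := fun a => c.getVert (idx a) with hf
  have hinj : Function.Injective f := by
    intro a b hab
    by_contra hne
    have hine : idx a ≠ idx b := fun h => hne (hidxinj a b h)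
    rcases Nat.lt_or_ge (idx a) (idx b) with h | h
    · exact L1 (idx a) (idx b) h (by have := hidxle b; omega)
        (by have := hidxle b; omega) hab
    · exact L1 (idx b) (idx a) (by omega) (by have := hidxle a; omega)
        (by have := hidxle a; omega) hab.symm
  -- adjacency characterization
  have key : ∀ a b : Fin (ℓ + 2), idx a < idx b → ¬(a.val = 0 ∧ b.val = 1) →
      ¬ G.Adj (f a) (f b) := by
    intro a b hlt hno
    refine L2 (idx a) (idx b) hlt (by have := hidxle b; omega) ?_ (by have := hidxle b; omega)
    have ha := a.isLt
    have hb := b.isLt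
    simp only [hidx] at hlt ⊢
    split_ifs at hlt ⊢ <;> omega
  have hval0 : (0 : Fin (ℓ + 2)).val = 0 := rfl
  have hval1 : (1 : Fin (ℓ + 2)).val = 1 := rfl
  have hadj01 : G.Adj (f 0) (f 1) := by
    have : G.Adj (c.getVert 0) (c.getVert 1) := c.adj_getVert_succ (by omega)
    simpa [hf, hidx, hval0, hval1] using this
  have hadjiff : ∀ a b : Fin (ℓ + 2), G.Adj (f a) (f b) ↔ (P2lP1 ℓ).Adj a b := by
    intro a b
    rw [P2l_adj]
    constructor
    · intro hadj
      by_contra hP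
      push_neg at hP
      have hne : a ≠ b := by rintro rfl; exact G.loopless.irrefl _ hadj
      have h01 : ¬(a.val = 0 ∧ b.val = 1) := by
        rintro ⟨h0, h1⟩
        exact (hP.1 (Fin.ext h0)) (Fin.ext h1)
      have h10 : ¬(b.val = 0 ∧ a.val = 1) := by
        rintro ⟨h0, h1⟩
        exact (hP.2 (Fin.ext h1)) (Fin.ext h0)
      have hine : idx a ≠ idx b := fun h => hne (hidxinj a b h)
      rcases Nat.lt_or_ge (idx a) (idx b) with h | h
      · exact key a b h h01 hadj
      · exact key b a (by omega) h10 hadj.symm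
    · rintro (⟨rfl, rfl⟩ | ⟨rfl, rfl⟩)
      · exact hadj01
      · exact hadj01.symm
  -- build the iso and contradict freeness
  have iso : P2lP1 ℓ ≃g G.induce (Set.range f) :=
    { toEquiv := Equiv.ofInjective f hinj
      map_rel_iff' := by
        intro a b
        simp only [Equiv.ofInjective_apply]
        exact hadjiff a b }
  exact ((hfree (Set.range f)).false iso.symm).elim





private def Cyc (ℓ : ℕ) : SimpleGraph (Fin (2 * ℓ + 1)) :=
  fromRel (fun i j => j = i + 1)

private lemma cyc_adj {ℓ : ℕ} {x y : Fin (2 * ℓ + 1)} :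
    (Cyc ℓ).Adj x y ↔ x ≠ y ∧ (y = x + 1 ∨ x = y + 1) := fromRel_adj _ _ _

private lemma fin_val_succ {ℓ : ℕ} (hℓ : 1 ≤ ℓ) (x : Fin (2 * ℓ + 1)) :
    (x + 1).val = (x.val + 1) % (2 * ℓ + 1) := by
  rw [Fin.add_def, Fin.val_one']
  rw [Nat.mod_eq_of_lt (by omega : 1 < 2 * ℓ + 1)]

private lemma cyc_del_color {ℓ : ℕ} (hℓ : 1 ≤ ℓ) (v x y : Fin (2 * ℓ + 1))
    (hx : x ≠ v) (hxy : y = x + 1) :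
    (x - v - 1).val % 2 ≠ (y - v - 1).val % 2 := by
  have hy' : y - v - 1 = (x - v - 1) + 1 := by rw [hxy]; abel
  have ha : x - v - 1 ≠ Fin.last (2 * ℓ) := by
    intro h
    apply hx
    have h1 : x - v - 1 + 1 = Fin.last (2 * ℓ) + 1 := by rw [h]
    rw [Fin.last_add_one] at h1
    have h2 : x - v = 0 := by
      calc x - v = x - v - 1 + 1 := (sub_add_cancel _ _).symm
        _ = 0 := h1
    exact sub_eq_zero.mp h2
  rw [hy', Fin.val_add_one, if_neg ha]
  omega

private def cycColorFun (ℓ : ℕ) : Fin (2 * ℓ + 1) → Fin 3 :=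
  fun i => if i.val = 2 * ℓ then 2 else ⟨i.val % 2, by omega⟩

private lemma cyc_critical {ℓ : ℕ} (hℓ : 1 ≤ ℓ) : IsKVertexCritical (Cyc ℓ) 3 := by
  classical
  have hwalk : ∀ k : ℕ, (hk : k ≤ 2 * ℓ) →
      ∃ w : (Cyc ℓ).Walk ⟨k, by omega⟩ ⟨0, by omega⟩, w.length = k := by
    intro k
    induction k with
    | zero => exact fun _ => ⟨Walk.nil, rfl⟩
    | succ j ih =>
      intro hk
      obtain ⟨w, hw⟩ := ih (by omega)
      have hadj : (Cyc ℓ).Adj ⟨j + 1, by omega⟩ ⟨j, by omega⟩ := by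
        rw [cyc_adj]
        refine ⟨by simp [Fin.ext_iff], Or.inr ?_⟩
        apply Fin.ext
        rw [fin_val_succ hℓ]
        exact (Nat.mod_eq_of_lt (by omega)).symm
      exact ⟨Walk.cons hadj w, by rw [Walk.length_cons, hw]⟩
  obtain ⟨w0, hw0⟩ := hwalk (2 * ℓ) le_rfl
  have hadj0 : (Cyc ℓ).Adj ⟨0, by omega⟩ ⟨2 * ℓ, by omega⟩ := by
    rw [cyc_adj]
    refine ⟨by simp [Fin.ext_iff]; omega, Or.inr ?_⟩
    apply Fin.ext
    rw [fin_val_succ hℓ]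
    exact (Nat.mod_self _).symm
  have hge : 3 ≤ (Cyc ℓ).chromaticNumber :=
    (Walk.cons hadj0 w0).three_le_chromaticNumber_of_odd_loop
      (by rw [Walk.length_cons, hw0]; exact ⟨ℓ, by omega⟩)
  have hcol : (Cyc ℓ).Coloring (Fin 3) := by
    refine Coloring.mk (cycColorFun ℓ) ?_
    have key : ∀ a b : Fin (2 * ℓ + 1), a ≠ b → b = a + 1 →
        cycColorFun ℓ a ≠ cycColorFun ℓ b := by
      intro a b hne hb
      have hbval : b.val = (a.val + 1) % (2 * ℓ + 1) := by rw [hb, fin_val_succ hℓ]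
      have ha := a.isLt
      have hcases : b.val = a.val + 1 ∨ (a.val = 2 * ℓ ∧ b.val = 0) := by
        rcases eq_or_ne a.val (2 * ℓ) with h | h
        · right; exact ⟨h, by rw [hbval, h]; exact Nat.mod_self _⟩
        · left; rw [hbval]; exact Nat.mod_eq_of_lt (by omega)
      unfold cycColorFun
      split_ifs with h1 h2 h2 <;> simp [Fin.ext_iff] <;> omega
    intro a b hadj
    rw [cyc_adj] at hadj
    rcases hadj.2 with h | h
    · exact key a b hadj.1 h
    · exact (key b a hadj.1.symm h).symm
  have hle : (Cyc ℓ).chromaticNumber ≤ 3 := hcol.colorable.chromaticNumber_le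
  constructor
  · have h3 : ((3 : ℕ) : ℕ∞) = (3 : ℕ∞) := by norm_num
    rw [h3]
    exact le_antisymm hle hge
  · intro v
    have col : (induce ({v}ᶜ : Set (Fin (2 * ℓ + 1))) (Cyc ℓ)).Coloring Bool := by
      refine Coloring.mk (fun x => decide ((x.val - v - 1).val % 2 = 0)) ?_
      rintro ⟨a, ha⟩ ⟨b, hb⟩ hadj
      have ha' : a ≠ v := by simpa using ha
      have hb' : b ≠ v := by simpa using hb
      have hadj' : (Cyc ℓ).Adj a b := hadj
      rw [cyc_adj] at hadj'
      have hne : (a - v - 1).val % 2 ≠ (b - v - 1).val % 2 := by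
        rcases hadj'.2 with h | h
        · exact cyc_del_color hℓ v a b ha' h
        · exact (cyc_del_color hℓ v b a hb' h).symm
      show decide ((a - v - 1).val % 2 = 0) ≠ decide ((b - v - 1).val % 2 = 0)
      rcases Nat.mod_two_eq_zero_or_one (a - v - 1).val with h1 | h1 <;>
        rcases Nat.mod_two_eq_zero_or_one (b - v - 1).val with h2 | h2 <;>
        rw [h1, h2] <;> first | (exact absurd (h1.trans h2.symm) hne) | decide
    have hcol2 : (induce ({v}ᶜ : Set (Fin (2 * ℓ + 1))) (Cyc ℓ)).Colorable 2 :=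
      ⟨(induce ({v}ᶜ : Set (Fin (2 * ℓ + 1))) (Cyc ℓ)).recolorOfEquiv finTwoEquiv.symm col⟩
    calc (induce ({v}ᶜ : Set (Fin (2 * ℓ + 1))) (Cyc ℓ)).chromaticNumber ≤ 2 :=
        hcol2.chromaticNumber_le
      _ < 3 := by norm_num

private lemma cyc_free {ℓ : ℕ} (hℓ : 1 ≤ ℓ) : InducedFree (Cyc ℓ) (P2lP1 ℓ) := by
  classical
  intro s
  refine ⟨fun e => ?_⟩
  set q : Fin (ℓ + 1) → Fin (ℓ + 2) := fun i => if i.val = 0 then 0 else ⟨i.val + 1, by omega⟩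
    with hq
  have hq1 : ∀ i, q i ≠ 1 := by
    intro i
    simp only [hq]
    split_ifs with h <;> intro hc <;> have := congrArg Fin.val hc <;> simp only [Fin.val_one, Fin.val_zero] at this <;> omega
  have hqinj : Function.Injective q := by
    intro i j hij
    simp only [hq] at hij
    apply Fin.ext
    split_ifs at hij with h1 h2 h2 <;> rw [Fin.ext_iff] at hij <;> simp at hij <;> omega
  set h : Fin (ℓ + 1) → Fin (2 * ℓ + 1) := fun i => (e.symm (q i)).val with hh
  have hinj : Function.Injective h := by
    intro i j hij
    exact hqinj (e.symm.injective (Subtype.val_injective hij))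
  have hindep : ∀ i j, ¬ (Cyc ℓ).Adj (h i) (h j) := by
    intro i j hadj
    have h2 : ((Cyc ℓ).induce s).Adj (e.symm (q i)) (e.symm (q j)) := hadj
    rw [e.symm.map_rel_iff] at h2
    rcases P2l_adj.mp h2 with ⟨_, h1⟩ | ⟨h1, _⟩
    · exact hq1 j h1
    · exact hq1 i h1
  have hone : (1 : Fin (2 * ℓ + 1)) ≠ 0 := by
    intro hc
    have hc' := congrArg Fin.val hc
    rw [Fin.val_one', Nat.mod_eq_of_lt (by omega : 1 < 2 * ℓ + 1)] at hc'
    simp at hc'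
  have hadd : ∀ i j : Fin (ℓ + 1), h i = h j + 1 → False := by
    intro i j hij
    rcases eq_or_ne i j with rfl | hne
    · exact hone (left_eq_add.mp hij)
    · apply hindep j i
      rw [cyc_adj]
      refine ⟨?_, Or.inl hij⟩
      intro hji
      rw [hji] at hij
      exact hone (left_eq_add.mp hij)
  set F : Fin (ℓ + 1) × Fin 2 → Fin (2 * ℓ + 1) :=
    fun p => if p.2 = 0 then h p.1 else h p.1 + 1 with hF
  have hFinj : Function.Injective F := by
    rintro ⟨i, bi⟩ ⟨j, bj⟩ heq
    simp only [hF] at heq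
    fin_cases bi <;> fin_cases bj <;> simp only [reduceIte, Fin.isValue] at heq
    · exact Prod.ext (hinj heq) rfl
    · exact absurd heq (fun hc => hadd i j hc)
    · exact absurd heq (fun hc => hadd j i hc.symm)
    · exact Prod.ext (hinj (add_right_cancel heq)) rfl
  have hcard := Fintype.card_le_of_injective F hFinj
  simp only [Fintype.card_prod, Fintype.card_fin] at hcard
  omega


theorem max_order_three_critical_P2lP1_free (ℓ : ℕ) (hℓ : 1 ≤ ℓ) :
    (∀ (V : Type) [Fintype V] (G : SimpleGraph V),
        IsKVertexCritical G 3 → InducedFree G (P2lP1 ℓ) → Fintype.card V ≤ 2 * ℓ + 1) ∧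
      ∃ G : SimpleGraph (Fin (2 * ℓ + 1)),
        IsKVertexCritical G 3 ∧ InducedFree G (P2lP1 ℓ) := by
  constructor
  · intro V _ G hcrit hfree
    exact main_upper hℓ V G hcrit hfree
  · exact ⟨Cyc ℓ, cyc_critical hℓ, cyc_free hℓ⟩
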